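/- Let 0 ≤ α < 1 and let f(z) = z + a_2 z² + a_3 z³ + ⋯ be holomorphic on D with f' nonvanishing and Re(1 + z f''(z)/f'(z)) ≥ α on D (f convex of order α). Then |a_3| ≤ (1-α)(3-2α)/3. -/

import Mathlib

open Complex Metric MeasureTheory intervalIntegral Real Filter

lemma carath_coeff (α : ℝ) (q : ℂ → ℂ)
    (hq : DifferentiableOn ℂ q (ball (0:ℂ) 1)) (hq0 : q 0 = 1)
    (hre : ∀ z ∈ ball (0:ℂ) 1, α ≤ (q z).re) (n : ℕ) (hn : 0 < n) :
    ‖iteratedDeriv n q 0‖ ≤ 2 * (1 - α) * n.factorial := by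
  -- reduce to radius r < 1
  have key : ∀ r : ℝ, 0 < r → r < 1 →
      ‖iteratedDeriv n q 0‖ * r ^ n ≤ 2 * (1 - α) * n.factorial := by
    intro r hr0 hr1
    set e : ℝ → ℂ := fun θ => circleMap 0 r θ with he_def
    have he_ne : ∀ θ, e θ ≠ 0 := fun θ => circleMap_ne_center hr0.ne'
    have he_abs : ∀ θ, ‖e θ‖ = r := fun θ => by
      simp [he_def, abs_of_pos hr0]
    have he_mem : ∀ θ, e θ ∈ ball (0:ℂ) 1 := fun θ => by
      rw [mem_ball_zero_iff, he_abs θ]; exact hr1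
    have hqc : Continuous fun θ => q (e θ) :=
      hq.continuousOn.comp_continuous (continuous_circleMap 0 r) he_mem
    have hec : Continuous e := continuous_circleMap 0 r
    have heinv : Continuous fun θ => (e θ)⁻¹ := hec.inv₀ he_ne
    -- circle integral as interval integral
    have hcirc : ∀ g : ℂ → ℂ, (∮ z in C(0, r), g z)
        = ∫ θ in (0:ℝ)..2*π, (e θ * I) * g (e θ) := by
      intro g
      simp [circleIntegral, deriv_circleMap, he_def, smul_eq_mul]
    -- J m
    set J : ℕ → ℂ := fun m => ∫ θ in (0:ℝ)..2*π, (e θ)⁻¹ ^ m * q (e θ) with hJ_def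
    have hJint : ∀ m : ℕ, IntervalIntegrable (fun θ => (e θ)⁻¹ ^ m * q (e θ))
        MeasureTheory.volume 0 (2*π) :=
      fun m => ((heinv.pow m).mul hqc).intervalIntegrable _ _
    -- power series
    set R : NNReal := ⟨r, hr0.le⟩ with hR_def
    have hRr : (R : ℝ) = r := rfl
    have hps : HasFPowerSeriesOnBall q (cauchyPowerSeries q 0 R) 0 R :=
      DifferentiableOn.hasFPowerSeriesOnBall
        (by rw [hRr]; exact hq.mono (closedBall_subset_ball hr1)) (by exact_mod_cast hr0)
    -- coefficient formula
    have hcoef : ∀ m : ℕ, iteratedDeriv m q 0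
        = (m.factorial : ℂ) * ((2 * ↑π * I)⁻¹ * (I * J m)) := by
      intro m
      have h1 := hps.factorial_smul (1:ℂ) m
      rw [hRr] at h1
      rw [iteratedDeriv_eq_iteratedFDeriv, ← h1, cauchyPowerSeries_apply]
      have h2 : (∮ z in C(0, r), ((1:ℂ) / (z - 0)) ^ m • (z - 0)⁻¹ • q z)
          = I * J m := by
        rw [hcirc]
        rw [hJ_def, ← intervalIntegral.integral_const_mul]
        refine intervalIntegral.integral_congr fun θ _ => ?_
        have := he_ne θ
        field_simp
        ring_nf; rw [mul_comm (e θ) (q (e θ)), mul_assoc (q (e θ)), mul_inv_cancel₀ this, mul_one]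
      rw [h2]
      simp only [smul_eq_mul, nsmul_eq_mul]
    -- K m = 0 for m ≥ 1
    have hK : ∀ m : ℕ, 0 < m → (∫ θ in (0:ℝ)..2*π, (e θ) ^ m * q (e θ)) = 0 := by
      intro m hm
      have hz : (∮ z in C(0, r), z ^ (m-1) * q z) = 0 := by
        apply circleIntegral_eq_zero_of_differentiable_on_off_countable hr0.le
          Set.countable_empty
        · exact ((continuous_id.pow _).continuousOn).mul
            (hq.continuousOn.mono (closedBall_subset_ball (by exact_mod_cast hr1)))
        · intro z hz
          have hz1 : z ∈ ball (0:ℂ) 1 := ball_subset_ball hr1.le hz.1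
          exact (differentiable_id.pow _).differentiableAt.mul
            ((hq.analyticOnNhd isOpen_ball z hz1).differentiableAt)
      rw [hcirc] at hz
      have h3 : (∫ θ in (0:ℝ)..2*π, (e θ * I) * ((e θ) ^ (m-1) * q (e θ)))
          = I * ∫ θ in (0:ℝ)..2*π, (e θ) ^ m * q (e θ) := by
        rw [← intervalIntegral.integral_const_mul]
        refine intervalIntegral.integral_congr fun θ _ => ?_
        have h4 : (e θ) ^ m = e θ * (e θ) ^ (m - 1) := by
          rw [← pow_succ', Nat.sub_add_cancel hm]
        rw [h4]; ring
      rw [h3] at hz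
      simpa [I_ne_zero] using hz
    -- conj e = r^2 * e⁻¹
    have hconj : ∀ θ, (starRingEnd ℂ) (e θ) = (r:ℂ)^2 * (e θ)⁻¹ := by
      intro θ
      have h1 : e θ * (starRingEnd ℂ) (e θ) = ((r:ℂ))^2 := by
        rw [Complex.mul_conj, Complex.normSq_eq_norm_sq, he_abs θ]
        push_cast; ring
      field_simp [he_ne θ]
      linear_combination h1
    -- J 0 = 2π
    have hπ : (π:ℂ) ≠ 0 := by exact_mod_cast Real.pi_ne_zero
    have hJ0 : J 0 = 2*π := by
      have h := hcoef 0
      rw [iteratedDeriv_zero, hq0] at h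
      field_simp [I_ne_zero, hπ] at h
      apply mul_left_cancel₀ I_ne_zero
      linear_combination (-I) * h
    -- Re (J 0) = 2π  and J 0 = ∫ q(e θ)
    have hJ0' : J 0 = ∫ θ in (0:ℝ)..2*π, q (e θ) := by
      rw [hJ_def]
      exact intervalIntegral.integral_congr fun θ _ => by simp
    have hReint : (∫ θ in (0:ℝ)..2*π, (q (e θ)).re) = 2*π := by
      have h := Complex.reCLM.intervalIntegral_comp_comm
        (hqc.intervalIntegrable (μ := MeasureTheory.volume) (0:ℝ) (2*π))
      simp only [Complex.reCLM_apply] at h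
      rw [h, ← hJ0', hJ0]
      simp
    -- ∫ e⁻¹ⁿ = 0
    have hL : (∫ θ in (0:ℝ)..2*π, (e θ)⁻¹ ^ n) = 0 := by
      have hform : ∀ θ : ℝ, (e θ)⁻¹ ^ n
          = ((r:ℂ))⁻¹^n * Complex.exp ((-(n:ℂ)*I) * (θ:ℝ)) := by
        intro θ
        have : e θ = (r:ℂ) * Complex.exp (θ * I) := circleMap_zero r θ
        rw [this, mul_inv, mul_pow, ← Complex.exp_neg, ← Complex.exp_nat_mul]
        ring_nf
      rw [intervalIntegral.integral_congr fun θ _ => hform θ,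
        intervalIntegral.integral_const_mul, integral_exp_mul_complex]
      · have h1 : (-(n:ℂ)*I) * ((2*π : ℝ):ℂ) = (((-(n:ℤ)) : ℤ):ℂ) * (2*↑π*I) := by
          push_cast; ring
        rw [h1, Complex.exp_int_mul_two_pi_mul_I]
        simp
      · have hne : (n:ℂ) ≠ 0 := Nat.cast_ne_zero.mpr hn.ne'
        simp [I_ne_zero, hne]
    -- ∫ e⁻¹ⁿ conj q = 0
    have hC : (∫ θ in (0:ℝ)..2*π, (e θ)⁻¹ ^ n * (starRingEnd ℂ) (q (e θ))) = 0 := by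
      have hKn := hK n hn
      have hconjint : (∫ θ in (0:ℝ)..2*π, (starRingEnd ℂ) ((e θ) ^ n * q (e θ))) = 0 := by
        have h := (Complex.conjCLE.toContinuousLinearMap
          (R₁ := ℝ)).intervalIntegral_comp_comm
          (((hec.pow n).mul hqc).intervalIntegrable (μ := MeasureTheory.volume) (0:ℝ) (2*π))
        simp only [ContinuousLinearEquiv.coe_coe] at h
        rw [show (⇑Complex.conjCLE : ℂ → ℂ) = ⇑(starRingEnd ℂ) from rfl] at h
        simp only [Pi.mul_apply, Pi.pow_apply] at h
        rw [h, hKn]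
        simp
      have h2 : (∫ θ in (0:ℝ)..2*π, (starRingEnd ℂ) ((e θ) ^ n * q (e θ)))
          = ((r:ℂ)^2)^n * ∫ θ in (0:ℝ)..2*π, (e θ)⁻¹ ^ n * (starRingEnd ℂ) (q (e θ)) := by
        rw [← intervalIntegral.integral_const_mul]
        refine intervalIntegral.integral_congr fun θ _ => ?_
        rw [map_mul, map_pow, hconj θ]
        ring
      rw [h2] at hconjint
      have hrne : ((r:ℂ)^2)^n ≠ 0 := by
        apply pow_ne_zero; apply pow_ne_zero
        exact_mod_cast hr0.ne'
      exact (mul_eq_zero.mp hconjint).resolve_left hrne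
    -- J n as integral of real part
    have hJn : J n = ∫ θ in (0:ℝ)..2*π,
        (e θ)⁻¹ ^ n * (((2*(q (e θ)).re - 2*α : ℝ)):ℂ) := by
      have hsplit : ∀ θ : ℝ, (e θ)⁻¹ ^ n * (((2*(q (e θ)).re - 2*α : ℝ)):ℂ)
          = (e θ)⁻¹ ^ n * q (e θ) + (e θ)⁻¹ ^ n * (starRingEnd ℂ) (q (e θ))
            - ((2*α : ℝ):ℂ) * (e θ)⁻¹ ^ n := by
        intro θ
        have hc := Complex.add_conj (q (e θ))
        push_cast at hc ⊢
        linear_combination (-((e θ)⁻¹ ^ n)) * hc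
      rw [intervalIntegral.integral_congr fun θ _ => hsplit θ]
      have i1 := hJint n
      have i2 : IntervalIntegrable (fun θ => (e θ)⁻¹ ^ n * (starRingEnd ℂ) (q (e θ)))
          MeasureTheory.volume 0 (2*π) :=
        ((heinv.pow n).mul (Complex.continuous_conj.comp hqc)).intervalIntegrable _ _
      have i3 : IntervalIntegrable (fun θ => ((2*α : ℝ):ℂ) * (e θ)⁻¹ ^ n)
          MeasureTheory.volume 0 (2*π) :=
        (continuous_const.mul (heinv.pow n)).intervalIntegrable _ _
      rw [intervalIntegral.integral_sub (i1.add i2) i3,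
        intervalIntegral.integral_add i1 i2, hC,
        intervalIntegral.integral_const_mul, hL]
      simp [hJ_def]
    -- bound ‖J n‖
    have hJbound : ‖J n‖ ≤ r⁻¹^n * (4*π*(1-α)) := by
      rw [hJn]
      have hb := intervalIntegral.norm_integral_le_integral_norm
        (f := fun θ => (e θ)⁻¹ ^ n * (((2*(q (e θ)).re - 2*α : ℝ)):ℂ))
        (μ := MeasureTheory.volume) (a := (0:ℝ)) (b := 2*π) Real.two_pi_pos.le
      refine le_trans hb ?_
      have hnorm : ∀ θ : ℝ, ‖(e θ)⁻¹ ^ n * (((2*(q (e θ)).re - 2*α : ℝ)):ℂ)‖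
          = r⁻¹^n * (2*(q (e θ)).re - 2*α) := by
        intro θ
        rw [norm_mul, norm_pow, norm_inv, he_abs θ,
          Complex.norm_real]
        congr 1
        rw [Real.norm_eq_abs, _root_.abs_of_nonneg]
        have := hre _ (he_mem θ)
        linarith
      rw [intervalIntegral.integral_congr fun θ _ => hnorm θ]
      have hint1 : IntervalIntegrable (fun θ => 2*(q (e θ)).re)
          MeasureTheory.volume (0:ℝ) (2*π) := by
        exact (continuous_const.mul (Complex.continuous_re.comp hqc)).intervalIntegrable _ _
      have hint2 : IntervalIntegrable (fun _ : ℝ => 2*α)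
          MeasureTheory.volume (0:ℝ) (2*π) := intervalIntegrable_const
      have h2re : (∫ θ in (0:ℝ)..2*π, 2*(q (e θ)).re)
          = 2 * ∫ θ in (0:ℝ)..2*π, (q (e θ)).re := by
        exact intervalIntegral.integral_const_mul _ _
      rw [intervalIntegral.integral_const_mul,
        intervalIntegral.integral_sub hint1 hint2, h2re, hReint]
      simp only [intervalIntegral.integral_const, smul_eq_mul, sub_zero]
      exact le_of_eq (by ring)
    -- conclude
    have habs : ‖iteratedDeriv n q 0‖
        = (n.factorial : ℝ) * ((2*π)⁻¹ * ‖J n‖) := by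
      rw [hcoef n]
      rw [norm_mul, norm_mul, norm_mul, norm_inv]
      simp [Real.pi_pos.le, abs_of_pos Real.pi_pos]
    rw [habs]
    have hrn : (0:ℝ) < r^n := pow_pos hr0 n
    rw [mul_comm (2*(1-α))]
    calc (n.factorial : ℝ) * ((2*π)⁻¹ * ‖J n‖) * r^n
        ≤ (n.factorial : ℝ) * ((2*π)⁻¹ * (r⁻¹^n * (4*π*(1-α)))) * r^n := by
          have h2π : (0:ℝ) < (2*π)⁻¹ := by positivity
          have := hJbound
          gcongr
      _ = (n.factorial : ℝ) * (2*(1-α)) := by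
          rw [inv_pow]
          field_simp
          ring
    -- final limit argument
  have h2 : Filter.Tendsto (fun r : ℝ => ‖iteratedDeriv n q 0‖ * r ^ n)
      (nhdsWithin 1 (Set.Iio 1)) (nhds (‖iteratedDeriv n q 0‖ * 1 ^ n)) :=
    ((continuous_const.mul (continuous_pow n)).tendsto 1).mono_left nhdsWithin_le_nhds
  have h3 : ∀ᶠ r in nhdsWithin (1:ℝ) (Set.Iio 1),
      ‖iteratedDeriv n q 0‖ * r ^ n ≤ 2 * (1 - α) * n.factorial := by
    filter_upwards [Ioo_mem_nhdsLT_of_mem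
      (Set.mem_Ioc.mpr ⟨(zero_lt_one : (0:ℝ) < 1), le_refl 1⟩)] with r hr
    exact key r hr.1 hr.2
  have := le_of_tendsto h2 h3
  simpa using this

theorem stmt_15 (α : ℝ) (hα0 : 0 ≤ α) (hα1 : α < 1)
    (f : ℂ → ℂ) (hf : DifferentiableOn ℂ f (ball (0:ℂ) 1))
    (h0 : f 0 = 0) (h1 : deriv f 0 = 1)
    (hf' : ∀ z ∈ ball (0:ℂ) 1, deriv f z ≠ 0)
    (a : ℕ → ℂ) (ha : ∀ n, a n = iteratedDeriv n f 0 / (Nat.factorial n))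
    (hconv : ∀ z ∈ ball (0:ℂ) 1,
      α ≤ (1 + z * iteratedDeriv 2 f z / deriv f z).re) :
    ‖a 3‖ ≤ (1 - α) * (3 - 2 * α) / 3 := by
  have hB : IsOpen (ball (0:ℂ) 1) := isOpen_ball
  have h0B : (0:ℂ) ∈ ball (0:ℂ) 1 := mem_ball_self one_pos
  have hfa : AnalyticOnNhd ℂ f (ball (0:ℂ) 1) := hf.analyticOnNhd hB
  set F1 : ℂ → ℂ := deriv f with hF1
  set F2 : ℂ → ℂ := deriv F1 with hF2
  set F3 : ℂ → ℂ := deriv F2 with hF3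
  have hF1a : AnalyticOnNhd ℂ F1 (ball (0:ℂ) 1) := hfa.deriv
  have hF2a : AnalyticOnNhd ℂ F2 (ball (0:ℂ) 1) := hF1a.deriv
  have hF3a : AnalyticOnNhd ℂ F3 (ball (0:ℂ) 1) := hF2a.deriv
  have hi2 : iteratedDeriv 2 f = F2 := by
    rw [show (2:ℕ) = 1 + 1 from rfl, iteratedDeriv_succ, iteratedDeriv_one]
  have hi3 : iteratedDeriv 3 f = F3 := by
    rw [show (3:ℕ) = 2 + 1 from rfl, iteratedDeriv_succ, hi2]
  set q : ℂ → ℂ := fun z => 1 + z * F2 z / F1 z with hq_def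
  have hqa : AnalyticOnNhd ℂ q (ball (0:ℂ) 1) := by
    apply (analyticOnNhd_const (v := (1:ℂ))).add
    exact (analyticOnNhd_id.mul hF2a).div hF1a hf'
  have hq0 : q 0 = 1 := by simp [hq_def]
  have hid : ∀ z ∈ ball (0:ℂ) 1, (q z - 1) * F1 z = z * F2 z := by
    intro z hz
    have hne := hf' z hz
    rw [hq_def]
    field_simp
    ring
  -- first derivative identity on the ball
  have hD1 : ∀ z ∈ ball (0:ℂ) 1,
      deriv q z * F1 z + (q z - 1) * F2 z = F2 z + z * F3 z := by
    intro z hz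
    have hqd : DifferentiableAt ℂ q z := (hqa z hz).differentiableAt
    have hF1d : DifferentiableAt ℂ F1 z := (hF1a z hz).differentiableAt
    have hF2d : DifferentiableAt ℂ F2 z := (hF2a z hz).differentiableAt
    have hLd : deriv (fun w => (q w - 1) * F1 w) z
        = deriv q z * F1 z + (q z - 1) * F2 z := by
      rw [deriv_fun_mul (hqd.sub_const 1) hF1d, deriv_sub_const]
    have hRd : deriv (fun w => w * F2 w) z = F2 z + z * F3 z := by
      rw [deriv_fun_mul differentiableAt_fun_id hF2d, deriv_id'']
      ring
    rw [← hLd, ← hRd]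
    apply Filter.EventuallyEq.deriv_eq
    filter_upwards [hB.mem_nhds hz] with w hw
    exact hid w hw
  have hc1 : deriv q 0 = F2 0 := by
    have h := hD1 0 h0B
    rw [hq0, h1] at h
    simpa using h
  -- second derivative identity at 0
  have hD2 : iteratedDeriv 2 q 0 + 2 * (F2 0)^2 = 2 * F3 0 := by
    have hqd' : AnalyticOnNhd ℂ (deriv q) (ball (0:ℂ) 1) := hqa.deriv
    have hLd : deriv (fun w => deriv q w * F1 w + (q w - 1) * F2 w) 0
        = deriv (deriv q) 0 * F1 0 + deriv q 0 * F2 0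
          + (deriv q 0 * F2 0 + (q 0 - 1) * F3 0) := by
      rw [deriv_fun_add ((((hqd' 0 h0B).differentiableAt)).fun_mul
          ((hF1a 0 h0B).differentiableAt))
          ((((hqa 0 h0B).differentiableAt).sub_const 1).fun_mul
          ((hF2a 0 h0B).differentiableAt)),
        deriv_fun_mul ((hqd' 0 h0B).differentiableAt) ((hF1a 0 h0B).differentiableAt),
        deriv_fun_mul (((hqa 0 h0B).differentiableAt).sub_const 1)
          ((hF2a 0 h0B).differentiableAt),
        deriv_sub_const]
    have hRd : deriv (fun w => F2 w + w * F3 w) 0 = F3 0 + (F3 0 + 0 * deriv F3 0) := by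
      rw [deriv_fun_add ((hF2a 0 h0B).differentiableAt)
          (differentiableAt_fun_id.fun_mul ((hF3a 0 h0B).differentiableAt)),
        deriv_fun_mul differentiableAt_fun_id ((hF3a 0 h0B).differentiableAt), deriv_id'']
      ring_nf
      rw [← hF3]; ring
    have heq : deriv (fun w => deriv q w * F1 w + (q w - 1) * F2 w) 0
        = deriv (fun w => F2 w + w * F3 w) 0 := by
      apply Filter.EventuallyEq.deriv_eq
      filter_upwards [hB.mem_nhds h0B] with w hw
      exact hD1 w hw
    rw [hLd, hRd] at heq
    rw [hq0, h1, hc1] at heq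
    rw [show (2:ℕ) = 1 + 1 from rfl, iteratedDeriv_succ, iteratedDeriv_one]
    linear_combination heq
  -- Caratheodory bounds
  have hre : ∀ z ∈ ball (0:ℂ) 1, α ≤ (q z).re := by
    intro z hz
    have := hconv z hz
    rwa [hi2] at this
  have hcar1 := carath_coeff α q hqa.differentiableOn hq0 hre 1 one_pos
  have hcar2 := carath_coeff α q hqa.differentiableOn hq0 hre 2 two_pos
  rw [iteratedDeriv_one] at hcar1
  simp only [Nat.factorial_one, Nat.cast_one, mul_one] at hcar1
  have hfac2 : ((Nat.factorial 2 : ℕ) : ℝ) = 2 := by norm_num [Nat.factorial]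
  rw [hfac2] at hcar2
  -- put it together
  have ha3 : a 3 = F3 0 / 6 := by
    rw [ha 3, hi3]
    norm_num [Nat.factorial]
  have hF3v : F3 0 = iteratedDeriv 2 q 0 / 2 + (F2 0)^2 := by
    linear_combination -hD2 / 2
  rw [ha3, hF3v, ← hc1]
  have hb1 : ‖deriv q 0‖ ≤ 2 * (1 - α) := hcar1
  have hb2 : ‖iteratedDeriv 2 q 0‖ ≤ 2 * (1 - α) * 2 := hcar2
  calc ‖(iteratedDeriv 2 q 0 / 2 + (deriv q 0)^2) / 6‖
      ≤ (‖iteratedDeriv 2 q 0‖ / 2 + (‖deriv q 0‖)^2) / 6 := by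
        have h := norm_add_le (iteratedDeriv 2 q 0 / 2) ((deriv q 0)^2)
        rw [norm_div, norm_pow] at h
        rw [norm_div]
        simp only [Complex.norm_ofNat] at h ⊢
        gcongr
      _ ≤ ((2 * (1 - α) * 2) / 2 + (2 * (1 - α))^2) / 6 := by
        have h1α : (0:ℝ) ≤ 1 - α := by linarith
        gcongr
      _ = (1 - α) * (3 - 2 * α) / 3 := by ring
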